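/- Let G be a connected real Lie group, μ a left Haar measure on G, and π a strongly continuous unitary representation of G on a separable complex Hilbert space H. For a compactly supported continuous function φ : G → ℂ, let π(φ) denote the bounded operator on H given by the Bochner integral π(φ)u = ∫_G φ(g)·(π(g)u) dμ(g). Then the following are equivalent: (a) there exist an open neighborhood V of the identity element of G and an integer m ≥ 0 such that for every m-times continuously differentiable function φ : G → ℂ with compact support contained in V, the operator π(φ) is trace class; (b) there exists an integer m ≥ 0 such that for every m-times continuously differentiable compactly supported function φ : G → ℂ, the operator π(φ) is trace class. (Equivalence of conditions 3) and 4) of Proposition I.1.) -/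

import Mathlib

open MeasureTheory Manifold TopologicalSpace

/-- A bounded operator on a Hilbert space is *Hilbert–Schmidt* if `∑ᵢ ‖S eᵢ‖² < ∞` for
some (equivalently, every) Hilbert basis `(eᵢ)`. -/
def IsHilbertSchmidt {H : Type*} [NormedAddCommGroup H] [InnerProductSpace ℂ H]
    (S : H →L[ℂ] H) : Prop :=
  ∃ (ι : Type) (e : HilbertBasis ι ℂ H), Summable fun i => ‖S (e i)‖ ^ 2

/-- A bounded operator is *trace class* if it is the composition of two Hilbert–Schmidt
operators. -/
def IsTraceClass {H : Type*} [NormedAddCommGroup H] [InnerProductSpace ℂ H]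
    (S : H →L[ℂ] H) : Prop :=
  ∃ S₁ S₂ : H →L[ℂ] H, IsHilbertSchmidt S₁ ∧ IsHilbertSchmidt S₂ ∧ S = S₁.comp S₂

set_option linter.unusedSectionVars false

section OperatorTheory
open scoped InnerProductSpace ENNReal NNReal
noncomputable section
variable {H : Type*} [NormedAddCommGroup H] [InnerProductSpace ℂ H]

theorem parseval {ι : Type*} (f : HilbertBasis ι ℂ H) (x : H) :
    HasSum (fun j => ‖⟪f j, x⟫_ℂ‖ ^ 2) (‖x‖ ^ 2) := by
  have h := f.hasSum_inner_mul_inner x x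
  have h2 : ∀ j, ⟪x, f j⟫_ℂ * ⟪f j, x⟫_ℂ = ((‖⟪f j, x⟫_ℂ‖ ^ 2 : ℝ) : ℂ) := fun j => by
    rw [← inner_conj_symm x (f j), mul_comm, Complex.mul_conj']
    norm_cast
  simp only [h2, inner_self_eq_norm_sq_to_K] at h
  exact_mod_cast (Complex.hasSum_iff _ _).mp h |>.1

theorem parseval_ennreal {ι : Type*} (f : HilbertBasis ι ℂ H) (x : H) :
    ∑' j, (‖⟪f j, x⟫_ℂ‖₊ : ℝ≥0∞) ^ 2 = (‖x‖₊ : ℝ≥0∞) ^ 2 := by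
  have h : HasSum (fun j => ‖⟪f j, x⟫_ℂ‖₊ ^ 2) (‖x‖₊ ^ 2) := by
    rw [← NNReal.hasSum_coe]; push_cast; exact parseval f x
  have := ENNReal.tsum_coe_eq h
  simpa [ENNReal.coe_pow] using this

/-- The (possibly infinite) sum `∑ᵢ ‖S eᵢ‖²` in `ℝ≥0∞`. -/
def hsS {ι : Type*} (S : H →L[ℂ] H) (e : HilbertBasis ι ℂ H) : ℝ≥0∞ :=
  ∑' i, (‖S (e i)‖₊ : ℝ≥0∞) ^ 2

variable [CompleteSpace H]

theorem hsS_eq_adjoint {ι κ : Type*} (S : H →L[ℂ] H) (e : HilbertBasis ι ℂ H)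
    (f : HilbertBasis κ ℂ H) : hsS S e = hsS (ContinuousLinearMap.adjoint S) f := by
  unfold hsS
  have h1 : ∀ i, (‖S (e i)‖₊ : ℝ≥0∞) ^ 2 = ∑' j, (‖⟪f j, S (e i)⟫_ℂ‖₊ : ℝ≥0∞) ^ 2 :=
    fun i => (parseval_ennreal f (S (e i))).symm
  simp only [h1]
  rw [ENNReal.tsum_comm]
  congr 1
  ext j
  have h2 : ∀ i, ‖⟪f j, S (e i)⟫_ℂ‖₊ = ‖⟪e i, (ContinuousLinearMap.adjoint S) (f j)⟫_ℂ‖₊ := by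
    intro i
    have := ContinuousLinearMap.adjoint_inner_left S (e i) (f j)
    rw [← this]
    exact NNReal.coe_injective (by simpa using norm_inner_symm (𝕜 := ℂ) ((ContinuousLinearMap.adjoint S) (f j)) (e i))
  simp only [h2]
  exact parseval_ennreal e _

theorem hsS_basis_indep {ι κ : Type*} (S : H →L[ℂ] H) (e : HilbertBasis ι ℂ H)
    (f : HilbertBasis κ ℂ H) : hsS S e = hsS S f := by
  rw [hsS_eq_adjoint S e f, hsS_eq_adjoint (ContinuousLinearMap.adjoint S) f f,
    ContinuousLinearMap.adjoint_adjoint]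

theorem summable_iff_hsS_ne_top {ι : Type*} (S : H →L[ℂ] H) (e : HilbertBasis ι ℂ H) :
    (Summable fun i => ‖S (e i)‖ ^ 2) ↔ hsS S e ≠ ⊤ := by
  unfold hsS
  have h1 : (fun i => ‖S (e i)‖ ^ 2) = fun i => ((‖S (e i)‖₊ ^ 2 : ℝ≥0) : ℝ) := by
    ext i; push_cast; ring
  have h2 : ∀ i, (‖S (e i)‖₊ : ℝ≥0∞) ^ 2 = ((‖S (e i)‖₊ ^ 2 : ℝ≥0) : ℝ≥0∞) := by
    intro i; push_cast; ring
  rw [h1, NNReal.summable_coe]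
  simp only [h2]
  rw [← ENNReal.tsum_coe_ne_top_iff_summable]
noncomputable section

-- small basis
theorem exists_smallBasis [CompleteSpace H] [TopologicalSpace.SeparableSpace H] :
    ∃ (ι : Type) (_ : HilbertBasis ι ℂ H), True := by
  obtain ⟨w, b, hb⟩ := exists_hilbertBasis ℂ H
  have horth : Orthonormal ℂ ((↑) : w → H) := hb ▸ b.orthonormal
  have hcount : Countable ↥w := by
    have hdisj : Pairwise (Function.onFun Disjoint fun i : w => Metric.ball (i : H) (1/2)) := by
      intro i j hij
      apply Metric.ball_disjoint_ball
      classical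
      have h2 : ‖(i : H) - j‖ ^ 2 = 2 := by
        have h0 := norm_sub_sq (𝕜 := ℂ) (i : H) j
        rw [horth.1 i, horth.1 j, orthonormal_iff_ite.mp horth i j] at h0
        rw [if_neg hij] at h0
        rw [h0]; norm_num
      have hge : (1:ℝ) ≤ ‖(i : H) - j‖ := by nlinarith [norm_nonneg ((i : H) - j)]
      rw [dist_eq_norm]
      linarith
    exact hdisj.countable_of_isOpen_disjoint (fun i => Metric.isOpen_ball)
      (fun i => Metric.nonempty_ball.mpr (by norm_num))
  obtain ⟨f, hf⟩ := exists_injective_nat ↥w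
  let e : ↥w ≃ Set.range f := Equiv.ofInjective f hf
  have horth2 : Orthonormal ℂ (((↑) : w → H) ∘ e.symm) := horth.comp _ e.symm.injective
  refine ⟨Set.range f, HilbertBasis.mk horth2 ?_, trivial⟩
  have : Set.range (((↑) : w → H) ∘ e.symm) = Set.range ((↑) : w → H) :=
    e.symm.surjective.range_comp _
  rw [this, ← hb]
  exact b.dense_span.symm.le

variable [CompleteSpace H] [TopologicalSpace.SeparableSpace H]

theorem isHS_iff {ι : Type*} (S : H →L[ℂ] H) (e : HilbertBasis ι ℂ H) :
    IsHilbertSchmidt S ↔ Summable fun i => ‖S (e i)‖ ^ 2 := by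
  constructor
  · rintro ⟨ι', e', h⟩
    rw [summable_iff_hsS_ne_top] at h ⊢
    rwa [hsS_basis_indep S e e']
  · intro h
    obtain ⟨ι₀, b₀, -⟩ := exists_smallBasis (H := H)
    refine ⟨ι₀, b₀, ?_⟩
    rw [summable_iff_hsS_ne_top] at h ⊢
    rwa [hsS_basis_indep S b₀ e]

theorem isHS_adjoint {S : H →L[ℂ] H} (h : IsHilbertSchmidt S) :
    IsHilbertSchmidt (ContinuousLinearMap.adjoint S) := by
  obtain ⟨ι, e, h⟩ := h
  rw [← isHS_iff S e] at h
  obtain ⟨ι₀, b₀, -⟩ := exists_smallBasis (H := H)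
  rw [isHS_iff _ b₀, summable_iff_hsS_ne_top, ← hsS_eq_adjoint S e b₀]
  obtain ⟨ι', e', h'⟩ := h
  rw [summable_iff_hsS_ne_top] at h'
  rwa [hsS_basis_indep S e e']

theorem isHS_comp_left (B : H →L[ℂ] H) {S : H →L[ℂ] H} (h : IsHilbertSchmidt S) :
    IsHilbertSchmidt (B.comp S) := by
  obtain ⟨ι, e, h⟩ := h
  refine ⟨ι, e, Summable.of_nonneg_of_le (fun i => by positivity) (fun i => ?_)
    (h.mul_left (‖B‖ ^ 2))⟩
  calc ‖(B.comp S) (e i)‖ ^ 2 ≤ (‖B‖ * ‖S (e i)‖) ^ 2 := by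
        apply pow_le_pow_left₀ (norm_nonneg _)
        exact B.le_opNorm _
    _ = ‖B‖ ^ 2 * ‖S (e i)‖ ^ 2 := by ring

theorem isHS_comp_right (B : H →L[ℂ] H) {S : H →L[ℂ] H} (h : IsHilbertSchmidt S) :
    IsHilbertSchmidt (S.comp B) := by
  have key : S.comp B = ContinuousLinearMap.adjoint
      ((ContinuousLinearMap.adjoint B).comp (ContinuousLinearMap.adjoint S)) := by
    rw [ContinuousLinearMap.adjoint_comp, ContinuousLinearMap.adjoint_adjoint,
      ContinuousLinearMap.adjoint_adjoint]
  rw [key]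
  exact isHS_adjoint (isHS_comp_left _ (isHS_adjoint h))

theorem isTC_comp_left (B : H →L[ℂ] H) {S : H →L[ℂ] H} (h : IsTraceClass S) :
    IsTraceClass (B.comp S) := by
  obtain ⟨S₁, S₂, h1, h2, rfl⟩ := h
  exact ⟨B.comp S₁, S₂, isHS_comp_left B h1, h2, by rw [ContinuousLinearMap.comp_assoc]⟩

theorem isTC_zero : IsTraceClass (0 : H →L[ℂ] H) := by
  obtain ⟨ι₀, b₀, -⟩ := exists_smallBasis (H := H)
  have h0 : IsHilbertSchmidt (0 : H →L[ℂ] H) := ⟨ι₀, b₀, by simpa using summable_zero⟩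
  exact ⟨0, 0, h0, h0, by ext u; simp⟩

section Jsec
variable {ι : Type*} (b : HilbertBasis ι ℂ H)

/-- The isometry sending `b i` to `b (σ i)` for an injection `σ`. -/
def Jmap {σ : ι → ι} (hσ : Function.Injective σ) : H →ₗᵢ[ℂ] H :=
  ((b.orthonormal.comp σ hσ).orthogonalFamily.linearIsometry).comp b.repr.toLinearIsometry

theorem hasSum_Jmap {σ : ι → ι} (hσ : Function.Injective σ) (u : H) :
    HasSum (fun i => b.repr u i • b (σ i)) (Jmap b hσ u) := by
  have h := (b.orthonormal.comp σ hσ).orthogonalFamily.hasSum_linearIsometry (b.repr u)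
  simpa [LinearIsometry.toSpanSingleton_apply, Jmap] using h

theorem inner_basis_Jmap {σ : ι → ι} (hσ : Function.Injective σ) (u : H) (k : ι)
    (hk : k ∉ Set.range σ) : ⟪b k, Jmap b hσ u⟫_ℂ = 0 := by
  classical
  have h := (hasSum_Jmap b hσ u).mapL (innerSL ℂ (b k))
  have h0 : (fun i => (innerSL ℂ (b k)) (b.repr u i • b (σ i))) = fun _ => (0 : ℂ) := by
    ext i
    have hne : k ≠ σ i := fun he => hk ⟨i, he.symm⟩
    simp only [innerSL_apply_apply, inner_smul_right]
    rw [orthonormal_iff_ite.mp b.orthonormal k (σ i), if_neg hne, mul_zero]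
  rw [h0] at h
  exact (h.unique hasSum_zero).symm ▸ rfl

theorem inner_Jmap_Jmap {σ₁ σ₂ : ι → ι} (h₁ : Function.Injective σ₁)
    (h₂ : Function.Injective σ₂) (hdis : ∀ i j, σ₁ i ≠ σ₂ j) (u w : H) :
    ⟪Jmap b h₁ u, Jmap b h₂ w⟫_ℂ = 0 := by
  have h := (hasSum_Jmap b h₂ w).mapL (innerSL ℂ (Jmap b h₁ u))
  have h0 : (fun j => (innerSL ℂ (Jmap b h₁ u)) (b.repr w j • b (σ₂ j))) =
      fun _ => (0 : ℂ) := by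
    ext j
    simp only [innerSL_apply_apply, inner_smul_right]
    rw [← inner_conj_symm, inner_basis_Jmap b h₁ u (σ₂ j) (fun ⟨i, hi⟩ => hdis i j hi)]
    simp
  rw [h0] at h
  exact (h.unique hasSum_zero).symm ▸ rfl

theorem adjJ_J {σ : ι → ι} (hσ : Function.Injective σ) (x : H) :
    ContinuousLinearMap.adjoint (Jmap b hσ).toContinuousLinearMap
      ((Jmap b hσ).toContinuousLinearMap x) = x := by
  apply ext_inner_right ℂ
  intro v
  rw [ContinuousLinearMap.adjoint_inner_left]
  simpa using (Jmap b hσ).inner_map_map x v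

theorem adjJ_J_cross {σ₁ σ₂ : ι → ι} (h₁ : Function.Injective σ₁)
    (h₂ : Function.Injective σ₂) (hdis : ∀ i j, σ₁ i ≠ σ₂ j) (x : H) :
    ContinuousLinearMap.adjoint (Jmap b h₁).toContinuousLinearMap
      ((Jmap b h₂).toContinuousLinearMap x) = 0 := by
  apply ext_inner_right ℂ
  intro v
  rw [ContinuousLinearMap.adjoint_inner_left, inner_zero_left]
  have := inner_Jmap_Jmap b h₁ h₂ hdis v x
  rw [← inner_conj_symm]
  simp only [LinearIsometry.coe_toContinuousLinearMap]
  rw [this]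
  simp

theorem isHS_J_comb {σ₁ σ₂ : ι → ι} (h₁ : Function.Injective σ₁)
    (h₂ : Function.Injective σ₂) (hdis : ∀ i j, σ₁ i ≠ σ₂ j) {P Q : H →L[ℂ] H}
    (hP : IsHilbertSchmidt P) (hQ : IsHilbertSchmidt Q) :
    IsHilbertSchmidt ((Jmap b h₁).toContinuousLinearMap.comp P
      + (Jmap b h₂).toContinuousLinearMap.comp Q) := by
  rw [isHS_iff _ b] at hP hQ ⊢
  have key : ∀ i, ‖((Jmap b h₁).toContinuousLinearMap.comp P
      + (Jmap b h₂).toContinuousLinearMap.comp Q) (b i)‖ ^ 2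
      = ‖P (b i)‖ ^ 2 + ‖Q (b i)‖ ^ 2 := fun i => by
    simp only [ContinuousLinearMap.add_apply, ContinuousLinearMap.comp_apply,
      LinearIsometry.coe_toContinuousLinearMap]
    rw [norm_add_sq (𝕜 := ℂ), inner_Jmap_Jmap b h₁ h₂ hdis]
    simp [(Jmap b h₁).norm_map, (Jmap b h₂).norm_map]
  simp only [key]
  exact hP.add hQ

end Jsec

theorem isTC_of_finiteDimensional [FiniteDimensional ℂ H] (S : H →L[ℂ] H) :
    IsTraceClass S := by
  have hHS : ∀ T : H →L[ℂ] H, IsHilbertSchmidt T := fun T =>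
    ⟨Fin (Module.finrank ℂ H), (stdOrthonormalBasis ℂ H).toHilbertBasis, Summable.of_finite⟩
  exact ⟨S, ContinuousLinearMap.id ℂ H, hHS S, hHS _, by ext u; simp⟩

theorem isTC_add {A B : H →L[ℂ] H} (hA : IsTraceClass A) (hB : IsTraceClass B) :
    IsTraceClass (A + B) := by
  by_cases hfd : FiniteDimensional ℂ H
  · exact isTC_of_finiteDimensional (A + B)
  obtain ⟨ι, b, -⟩ := exists_smallBasis (H := H)
  have hinf : Infinite ι := by
    rcases finite_or_infinite ι with hfin | hinf
    · haveI := Fintype.ofFinite ι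
      exact absurd (Module.Finite.of_basis b.toOrthonormalBasis.toBasis) hfd
    · exact hinf
  obtain ⟨E⟩ : Nonempty (ι ⊕ ι ≃ ι) := by
    rw [← Cardinal.eq]
    simp [Cardinal.add_eq_self (Cardinal.aleph0_le_mk ι)]
  set σ₁ : ι → ι := E ∘ Sum.inl with hσ₁def
  set σ₂ : ι → ι := E ∘ Sum.inr with hσ₂def
  have h₁ : Function.Injective σ₁ := E.injective.comp Sum.inl_injective
  have h₂ : Function.Injective σ₂ := E.injective.comp Sum.inr_injective
  have hdis : ∀ i j, σ₁ i ≠ σ₂ j := fun i j he => by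
    have := E.injective he
    simp at this
  obtain ⟨S₁, S₂, hS₁, hS₂, rfl⟩ := hA
  obtain ⟨T₁, T₂, hT₁, hT₂, rfl⟩ := hB
  set J₁ := (Jmap b h₁).toContinuousLinearMap with hJ₁def
  set J₂ := (Jmap b h₂).toContinuousLinearMap with hJ₂def
  refine ⟨S₁.comp (ContinuousLinearMap.adjoint J₁) + T₁.comp (ContinuousLinearMap.adjoint J₂),
    J₁.comp S₂ + J₂.comp T₂, ?_, ?_, ?_⟩
  · have : S₁.comp (ContinuousLinearMap.adjoint J₁) + T₁.comp (ContinuousLinearMap.adjoint J₂)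
        = ContinuousLinearMap.adjoint
          (J₁.comp (ContinuousLinearMap.adjoint S₁) + J₂.comp (ContinuousLinearMap.adjoint T₁)) := by
      rw [map_add, ContinuousLinearMap.adjoint_comp, ContinuousLinearMap.adjoint_comp,
        ContinuousLinearMap.adjoint_adjoint, ContinuousLinearMap.adjoint_adjoint]
    rw [this]
    exact isHS_adjoint (isHS_J_comb b h₁ h₂ hdis (isHS_adjoint hS₁) (isHS_adjoint hT₁))
  · exact isHS_J_comb b h₁ h₂ hdis hS₂ hT₂
  · ext u
    simp only [hJ₁def, hJ₂def, ContinuousLinearMap.add_apply, ContinuousLinearMap.comp_apply,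
      map_add]
    rw [adjJ_J b h₁, adjJ_J b h₂, adjJ_J_cross b h₁ h₂ hdis,
      adjJ_J_cross b h₂ h₁ (fun i j he => hdis j i he.symm)]
    simp

theorem isTC_finsetSum {κ : Type*} (s : Finset κ) (F : κ → (H →L[ℂ] H))
    (hF : ∀ k ∈ s, IsTraceClass (F k)) : IsTraceClass (∑ k ∈ s, F k) := by
  classical
  induction s using Finset.induction_on with
  | empty => simpa using isTC_zero
  | insert _ _ hk ih =>
    rw [Finset.sum_insert hk]
    exact isTC_add (hF _ (Finset.mem_insert_self _ _))
      (ih fun k hks => hF k (Finset.mem_insert_of_mem hks))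

end
end
end OperatorTheory

section GroupTopology
open Set Pointwise


theorem myT2 {E : Type*} [NormedAddCommGroup E] [NormedSpace ℝ E]
    {G : Type*} [TopologicalSpace G] [ChartedSpace E G] [Group G] [IsTopologicalGroup G] :
    T2Space G := by
  rw [IsTopologicalGroup.t2Space_iff_one_closed, ← isOpen_compl_iff, isOpen_iff_forall_mem_open]
  intro x hx
  replace hx : x ≠ 1 := hx
  set e := chartAt E x with hedef
  by_cases h1 : (1 : G) ∈ e.source
  · refine ⟨e.source ∩ e ⁻¹' {z | z ≠ e 1}, ?_,
      e.isOpen_inter_preimage isOpen_ne, ⟨mem_chart_source E x, ?_⟩⟩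
    · rintro y ⟨hy1, hy2⟩ (rfl : y = 1)
      exact hy2 rfl
    · exact fun he => hx (e.injOn (mem_chart_source E x) h1 he)
  · exact ⟨e.source, fun y hy (hy1 : y = 1) => h1 (hy1 ▸ hy), e.open_source, mem_chart_source E x⟩

theorem mySigmaCompact {G : Type*} [TopologicalSpace G] [Group G] [IsTopologicalGroup G]
    [ConnectedSpace G] [WeaklyLocallyCompactSpace G] :
    SigmaCompactSpace G := by
  obtain ⟨K, hKc, hK1⟩ := exists_compact_mem_nhds (1 : G)
  set S : Set G := K ∪ K⁻¹ ∪ {1} with hSdef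
  have hScomp : IsCompact S := (hKc.union hKc.inv).union isCompact_singleton
  have hSinv : S⁻¹ = S := by
    rw [hSdef]
    simp only [Set.union_inv, Set.inv_singleton, inv_one, inv_inv]
    rw [Set.union_comm K⁻¹ K]
  have hS1 : (1 : G) ∈ S := by simp [hSdef]
  have hKsub : (K : Set G) ⊆ ↑(Subgroup.closure K) := Subgroup.subset_closure
  have hopen : IsOpen ((Subgroup.closure K : Subgroup G) : Set G) :=
    Subgroup.isOpen_of_mem_nhds _ (Filter.mem_of_superset hK1 hKsub)
  have hclopen : IsClopen ((Subgroup.closure K : Subgroup G) : Set G) :=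
    ⟨Subgroup.isClosed_of_isOpen _ hopen, hopen⟩
  have huniv : ((Subgroup.closure K : Subgroup G) : Set G) = univ :=
    hclopen.eq_univ ⟨1, Subgroup.one_mem _⟩
  have hpow_inv : ∀ n : ℕ, (S ^ n)⁻¹ = S ^ n := by
    intro n
    induction n with
    | zero => simp
    | succ n ih => rw [pow_succ, mul_inv_rev, hSinv, ih, ← pow_succ', pow_succ]
  have hcover : ∀ x : G, x ∈ ⋃ n : ℕ, S ^ (n + 1) := by
    intro x
    have hx : x ∈ Subgroup.closure (K : Set G) := by
      have h' := mem_univ x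
      rw [← huniv] at h'
      exact h'
    induction hx using Subgroup.closure_induction with
    | mem y hy => exact mem_iUnion.mpr ⟨0, by rw [zero_add, pow_one]; exact Or.inl (Or.inl hy)⟩
    | one => exact mem_iUnion.mpr ⟨0, by rw [zero_add, pow_one]; exact hS1⟩
    | mul y z hy' hz' hy hz =>
        obtain ⟨m, hm⟩ := mem_iUnion.mp hy
        obtain ⟨n, hn⟩ := mem_iUnion.mp hz
        refine mem_iUnion.mpr ⟨m + n + 1, ?_⟩
        rw [show m + n + 1 + 1 = (m + 1) + (n + 1) by ring, pow_add]
        exact Set.mul_mem_mul hm hn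
    | inv y hy' hy =>
        obtain ⟨n, hn⟩ := mem_iUnion.mp hy
        exact mem_iUnion.mpr ⟨n, by rw [← hpow_inv (n+1)]; exact Set.inv_mem_inv.mpr hn⟩
  have hpowc : ∀ n : ℕ, IsCompact (S ^ (n + 1)) := by
    intro n
    induction n with
    | zero => simpa [pow_one] using hScomp
    | succ n ih => rw [pow_succ]; exact ih.mul hScomp
  exact ⟨⟨fun n => S ^ (n + 1), hpowc, iUnion_eq_univ_iff.mpr fun x => mem_iUnion.mp (hcover x)⟩⟩


end GroupTopology

open Set Function

/-- Equivalence of conditions 3) and 4) of Proposition I.1: for a strongly continuous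
unitary representation `π` of a connected Lie group `G` on a separable Hilbert space,
there is a neighbourhood `V` of the identity and an integer `m` such that `π(φ)` is trace
class for all `φ ∈ C^m_c(V)` if and only if there is an integer `m` such that `π(φ)` is
trace class for all `φ ∈ C^m_c(G)`.  Here `π(φ)` is the bounded operator defined by the
Bochner integral `π(φ)u = ∫ φ(g)·(π(g)u) dμ(g)` for a left Haar measure `μ`. -/
theorem traceClass_locally_iff_globally
    {E : Type*} [NormedAddCommGroup E] [NormedSpace ℝ E] [FiniteDimensional ℝ E]
    {G : Type*} [TopologicalSpace G] [ChartedSpace E G] [Group G] [IsTopologicalGroup G]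
    [LieGroup 𝓘(ℝ, E) (⊤ : ℕ∞) G] [ConnectedSpace G]
    [MeasurableSpace G] [BorelSpace G]
    (μ : Measure G) [μ.IsHaarMeasure]
    {H : Type*} [NormedAddCommGroup H] [InnerProductSpace ℂ H] [CompleteSpace H]
    [SeparableSpace H]
    (π : G →* (H →L[ℂ] H))
    (hunitary : ∀ (g : G) (u : H), ‖π g u‖ = ‖u‖)
    (hstrongcont : ∀ u : H, Continuous fun g => π g u) :
    (∃ V : Set G, IsOpen V ∧ (1 : G) ∈ V ∧ ∃ m : ℕ,
        ∀ φ : G → ℂ, ContMDiff 𝓘(ℝ, E) 𝓘(ℝ, ℂ) m φ → HasCompactSupport φ →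
          tsupport φ ⊆ V →
          ∃ A : H →L[ℂ] H, (∀ u : H, A u = ∫ g, φ g • (π g u) ∂μ) ∧ IsTraceClass A) ↔
    (∃ m : ℕ, ∀ φ : G → ℂ, ContMDiff 𝓘(ℝ, E) 𝓘(ℝ, ℂ) m φ → HasCompactSupport φ →
        ∃ A : H →L[ℂ] H, (∀ u : H, A u = ∫ g, φ g • (π g u) ∂μ) ∧ IsTraceClass A) := by
  constructor
  · rintro ⟨V, hVopen, hV1, m, hloc⟩
    refine ⟨m, fun φ hφ hφc => ?_⟩
    -- topological instances
    haveI : T2Space G := myT2 (E := E)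
    haveI : LocallyCompactSpace G := ChartedSpace.locallyCompactSpace E G
    haveI : SigmaCompactSpace G := mySigmaCompact
    haveI : SecondCountableTopology H := UniformSpace.secondCountable_of_separable H
    have hφcont : Continuous φ := hφ.continuous
    -- the covering by translates of V
    set U : G → Set G := fun g => (g * ·) '' V with hUdef
    have hUopen : ∀ g, IsOpen (U g) := fun g => (Homeomorph.mulLeft g).isOpenMap V hVopen
    have hUmem : ∀ x, x ∈ U x := fun x => ⟨1, hV1, mul_one x⟩
    have hcover : tsupport φ ⊆ ⋃ i, U i := fun x _ => mem_iUnion.mpr ⟨x, hUmem x⟩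
    -- smooth partition of unity
    obtain ⟨f, hf⟩ := SmoothPartitionOfUnity.exists_isSubordinate (I := 𝓘(ℝ, E))
      (isClosed_tsupport φ) U hUopen hcover
    classical
    set T : Finset G := (f.locallyFinite.finite_nonempty_inter_compact hφc).toFinset with hTdef
    set φi : G → G → ℂ := fun i x => f i x • φ x with hφidef
    set ψ : G → G → ℂ := fun i x => φi i (i * x) with hψdef
    -- properties of the pieces
    have hφi_smooth : ∀ i, ContMDiff 𝓘(ℝ, E) 𝓘(ℝ, ℂ) m (φi i) := fun i =>
      (((f i).contMDiff).of_le (by exact_mod_cast le_top)).smul hφ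
    have hφi_supp_f : ∀ i, support (φi i) ⊆ support (f i) := fun i x hx => by
      intro h0
      apply hx
      simp only [hφidef, h0, zero_smul]
    have hφi_supp_φ : ∀ i, support (φi i) ⊆ support φ := fun i x hx => by
      intro h0
      apply hx
      simp only [hφidef, h0, smul_zero]
    have hφi_compact : ∀ i, HasCompactSupport (φi i) := fun i =>
      hφc.mono (hφi_supp_φ i)
    have hψ_smooth : ∀ i, ContMDiff 𝓘(ℝ, E) 𝓘(ℝ, ℂ) m (ψ i) := fun i =>
      (hφi_smooth i).comp contMDiff_mul_left
    have hψ_eq : ∀ i, ψ i = φi i ∘ (Homeomorph.mulLeft i) := fun i => rfl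
    have hψ_compact : ∀ i, HasCompactSupport (ψ i) := fun i => by
      rw [hψ_eq i]
      exact (hφi_compact i).comp_homeomorph (Homeomorph.mulLeft i)
    have hψ_supp : ∀ i, tsupport (ψ i) ⊆ V := by
      intro i
      have h1 : tsupport (φi i) ⊆ U i := le_trans (closure_mono (hφi_supp_f i)) (hf i)
      have h2 : tsupport (ψ i) = (Homeomorph.mulLeft i) ⁻¹' (tsupport (φi i)) := by
        rw [hψ_eq i]
        unfold tsupport
        rw [support_comp_eq_preimage, ← Homeomorph.preimage_closure]
      rw [h2]
      intro x hx
      have hx2 : i * x ∈ U i := h1 hx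
      obtain ⟨v, hv, hvx⟩ := hx2
      rwa [show v = x from mul_left_cancel hvx] at hv
    -- apply the local hypothesis
    have hAi : ∀ i : G, ∃ A : H →L[ℂ] H,
        (∀ u : H, A u = ∫ g, ψ i g • (π g u) ∂μ) ∧ IsTraceClass A := fun i =>
      hloc (ψ i) (hψ_smooth i) (hψ_compact i) (hψ_supp i)
    choose Ai hAiu hAitc using hAi
    -- integrability
    have int1 : ∀ (i : G) (u : H), Integrable (fun g => ψ i g • π g u) μ := fun i u =>
      (((hψ_smooth i).continuous).smul (hstrongcont u)).integrable_of_hasCompactSupport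
        ((hψ_compact i).smul_right)
    have int2 : ∀ (i : G) (u : H), Integrable (fun g => φi i g • π g u) μ := fun i u =>
      ((((f i).contMDiff.continuous).smul hφcont).smul (hstrongcont u)).integrable_of_hasCompactSupport
        ((hφi_compact i).smul_right)
    -- the translated operators
    have hB : ∀ (i : G) (u : H), (π i) (Ai i u) = ∫ g, φi i g • (π g u) ∂μ := by
      intro i u
      rw [hAiu i u, ← ContinuousLinearMap.integral_comp_comm (π i) (int1 i u)]
      have hpt : ∀ g, (π i) (ψ i g • π g u) = φi i (i * g) • π (i * g) u := by
        intro g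
        rw [_root_.map_smul, ← ContinuousLinearMap.mul_apply, ← _root_.map_mul]
      simp only [hpt]
      exact integral_mul_left_eq_self (fun g => φi i g • π g u) i
    -- key pointwise decomposition
    have hkey : ∀ x, φ x = ∑ i ∈ T, φi i x := by
      intro x
      by_cases hx : x ∈ tsupport φ
      · have hsub : (Function.support fun i => f i x) ⊆ ↑T := by
          intro i hi
          rw [hTdef, Set.Finite.coe_toFinset]
          exact ⟨x, hi, hx⟩
        have hsum : ∑ i ∈ T, f i x = 1 := by
          rw [← finsum_eq_finset_sum_of_support_subset _ hsub]
          exact f.sum_eq_one hx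
        calc φ x = (∑ i ∈ T, f i x) • φ x := by rw [hsum, one_smul]
          _ = ∑ i ∈ T, f i x • φ x := by rw [Finset.sum_smul]
      · have hφx : φ x = 0 := image_eq_zero_of_notMem_tsupport hx
        simp [hφidef, hφx]
    -- assemble
    refine ⟨∑ i ∈ T, (π i).comp (Ai i), fun u => ?_, ?_⟩
    · rw [ContinuousLinearMap.sum_apply]
      have h1 : ∀ i ∈ T, (π i).comp (Ai i) u = ∫ g, φi i g • (π g u) ∂μ := fun i _ => hB i u
      rw [Finset.sum_congr rfl h1, ← integral_finset_sum T (fun i _ => int2 i u)]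
      congr 1
      ext g
      rw [← Finset.sum_smul, ← hkey g]
    · exact isTC_finsetSum T _ (fun i _ => isTC_comp_left (π i) (hAitc i))
  · rintro ⟨m, hglob⟩
    exact ⟨univ, isOpen_univ, mem_univ 1, m, fun φ hφ hφc _ => hglob φ hφ hφc⟩
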